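/- Let N be a normal subgroup of a finite group G, and let φ, ψ be irreducible complex characters of N. Then the induced characters Ind_N^G φ and Ind_N^G ψ are equal if and only if φ and ψ are G-conjugate (i.e., ψ(n) = φ(g n g⁻¹) for some g ∈ G and all n ∈ N). -/

import Mathlib

open CategoryTheory


noncomputable def resEquiv {G H : Type} [Group G] [Group H] (e : G ≃* H) :
    FDRep ℂ H ≌ FDRep ℂ G :=
  CategoryTheory.Equivalence.mk (Action.res _ e.toMonoidHom)
    (Action.res _ e.symm.toMonoidHom)
    (NatIso.ofComponents (fun M => Action.mkIso (Iso.refl _)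
      (by intro h; erw [Category.comp_id, Category.id_comp]; exact congrArg (Action.ρ M) (e.apply_symm_apply h).symm)) (by aesop_cat))
    (NatIso.ofComponents (fun M => Action.mkIso (Iso.refl _)
      (by intro h; erw [Category.comp_id, Category.id_comp]; exact congrArg (Action.ρ M) (e.symm_apply_apply h))) (by aesop_cat))

open CategoryTheory Limits in
lemma simple_of_equivalence {C D : Type*} [Category C] [Category D]
    [HasZeroMorphisms C] [HasZeroMorphisms D]
    (E : C ≌ D) [E.functor.PreservesZeroMorphisms] [E.inverse.PreservesZeroMorphisms]
    (X : C) [Simple X] : Simple (E.functor.obj X) := by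
  constructor
  intro Y f hf
  let g : E.inverse.obj Y ⟶ X := E.inverse.map f ≫ E.unitInv.app X
  haveI hg : Mono g := mono_comp _ _
  have h1 : IsIso (E.inverse.map f) ↔ IsIso g := by
    constructor
    · intro _; exact IsIso.comp_isIso
    · intro _; exact IsIso.of_isIso_comp_right (E.inverse.map f) (E.unitInv.app X)
  have h2 : f = 0 ↔ g = 0 := by
    rw [← E.inverse.map_eq_zero_iff (f := f)]
    constructor
    · intro h; simp [g, h]
    · intro h
      have := congrArg (fun t => t ≫ E.unit.app X) h
      simpa [g, Category.assoc] using this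
  rw [← isIso_iff_of_reflects_iso f E.inverse, h1,
    Simple.mono_isIso_iff_nonzero g, not_iff_not, h2]

noncomputable def resObj {G H : Type} [Group G] [Group H] (e : G ≃* H) (V : FDRep ℂ H) :
    FDRep ℂ G := (Action.res _ e.toMonoidHom).obj V

lemma simple_res {G H : Type} [Group G] [Group H] (e : G ≃* H) (V : FDRep ℂ H) [Simple V] :
    Simple (resObj e V) := by
  haveI : (resEquiv e).functor.PreservesZeroMorphisms :=
    (inferInstance : (Action.res _ e.toMonoidHom).PreservesZeroMorphisms)
  haveI : (resEquiv e).inverse.PreservesZeroMorphisms :=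
    (inferInstance : (Action.res _ e.symm.toMonoidHom).PreservesZeroMorphisms)
  exact simple_of_equivalence (resEquiv e) V

lemma char_res {G H : Type} [Group G] [Group H] (e : G ≃* H) (V : FDRep ℂ H) (g : G) :
    (resObj e V).character g = V.character (e g) := rfl


open scoped Classical in
theorem inducedChar_aux {G : Type} [Group G] [Fintype G] (N : Subgroup G)
    [hN : N.Normal] [DecidablePred fun g => g ∈ N] (φ ψ : ↥N → ℂ)
    (hφ : ∃ V : FDRep ℂ ↥N, Simple V ∧ V.character = φ)
    (hψ : ∃ V : FDRep ℂ ↥N, Simple V ∧ V.character = ψ) :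
    (∀ n : ↥N, ∑ x : G, φ ((MulAut.conjNormal x⁻¹ : ↥N ≃* ↥N) n)
        = ∑ x : G, ψ ((MulAut.conjNormal x⁻¹ : ↥N ≃* ↥N) n)) →
      ∃ g : G, ∀ n : ↥N, ψ n = φ ⟨g * ↑n * g⁻¹, hN.conj_mem ↑n n.2 g⟩ := by
  obtain ⟨V, hVs, hVφ⟩ := hφ
  obtain ⟨W, hWs, hWψ⟩ := hψ
  haveI := hVs; haveI := hWs
  intro hsum
  set e : G → (↥N ≃* ↥N) := fun x => (MulAut.conjNormal x⁻¹ : ↥N ≃* ↥N) with he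
  haveI : Invertible (Fintype.card ↥N : ℂ) :=
    invertibleOfNonzero (Nat.cast_ne_zero.mpr Fintype.card_ne_zero)
  have orth : ∀ (U : FDRep ℂ ↥N), Simple U →
      ⅟ (Fintype.card ↥N : ℂ) • ∑ n : ↥N, U.character n * W.character n⁻¹ =
        if Nonempty (U ≅ W) then 1 else 0 := by
    intro U hU
    haveI := hU
    have h := FDRep.char_orthonormal U W
    convert h using 2
    rw [invOf_eq_inv, Nat.card_eq_fintype_card, smul_eq_mul]
  have charres : ∀ (x : G) (U : FDRep ℂ ↥N) (n : ↥N),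
      (resObj (e x) U).character n = U.character ((e x) n) := fun _ _ _ => rfl
  have key : ∀ (U : FDRep ℂ ↥N) (χ : ↥N → ℂ), Simple U → U.character = χ →
      ∑ x : G, (if Nonempty (resObj (e x) U ≅ W) then (1:ℂ) else 0)
        = ⅟ (Fintype.card ↥N : ℂ) • ∑ x : G, ∑ n : ↥N, χ ((e x) n) * ψ n⁻¹ := by
    intro U χ hU hUχ
    rw [Finset.smul_sum]
    apply Finset.sum_congr rfl
    intro x _
    rw [← orth (resObj (e x) U) (simple_res (e x) U)]
    congr 1
    apply Finset.sum_congr rfl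
    intro n _
    rw [charres, hUχ, hWψ]
  have keyeq : ∑ x : G, (if Nonempty (resObj (e x) V ≅ W) then (1:ℂ) else 0)
      = ∑ x : G, (if Nonempty (resObj (e x) W ≅ W) then (1:ℂ) else 0) := by
    rw [key V φ hVs hVφ, key W ψ hWs hWψ]
    congr 1
    have swap : ∀ (χ : ↥N → ℂ), ∑ x : G, ∑ n : ↥N, χ ((e x) n) * ψ n⁻¹
        = ∑ n : ↥N, (∑ x : G, χ ((e x) n)) * ψ n⁻¹ := by
      intro χ
      rw [Finset.sum_comm]
      exact Finset.sum_congr rfl fun n _ => (Finset.sum_mul _ _ _).symm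
    rw [swap, swap]
    exact Finset.sum_congr rfl fun n _ => congrArg (· * ψ n⁻¹) (hsum n)
  have hne : ∑ x : G, (if Nonempty (resObj (e x) W ≅ W) then (1:ℂ) else 0) ≠ 0 := by
    rw [Finset.sum_boole]
    have h1 : (1 : G) ∈ Finset.univ.filter (fun x => Nonempty (resObj (e x) W ≅ W)) := by
      rw [Finset.mem_filter]
      refine ⟨Finset.mem_univ _, ⟨Action.mkIso (Iso.refl _) ?_⟩⟩
      intro n
      have : (e 1) n = n := by
        simp [he]
      erw [Category.comp_id, Category.id_comp]; exact congrArg (Action.ρ W) this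
    exact Nat.cast_ne_zero.mpr (Finset.card_ne_zero_of_mem h1)
  have : ∃ x : G, Nonempty (resObj (e x) V ≅ W) := by
    by_contra hc
    push_neg at hc
    apply hne
    rw [← keyeq]
    apply Finset.sum_eq_zero
    intro x _
    rw [if_neg (not_nonempty_iff.mpr (hc x))]
  obtain ⟨x, ⟨i⟩⟩ := this
  refine ⟨x⁻¹, fun n => ?_⟩
  have hchar := FDRep.char_iso i
  have := congrFun hchar n
  rw [charres, hVφ] at this
  rw [← hWψ, ← this]
  congr 1

/-- The induced character `Ind_N^G φ` of a class function `φ` of a subgroup `N ≤ G`. -/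
noncomputable def inducedChar {G : Type} [Group G] [Fintype G] (N : Subgroup G)
    [DecidablePred fun g => g ∈ N] (φ : ↥N → ℂ) : G → ℂ :=
  fun g => (Fintype.card N : ℂ)⁻¹ *
    ∑ x : G, if h : x⁻¹ * g * x ∈ N then φ ⟨x⁻¹ * g * x, h⟩ else 0

/-- For a normal subgroup `N ⊴ G` and irreducible complex characters `φ, ψ` of `N`, the
induced characters agree iff `φ` and `ψ` are `G`-conjugate. -/
theorem inducedChar_eq_iff_conj {G : Type} [Group G] [Fintype G] (N : Subgroup G)
    [hN : N.Normal] [DecidablePred fun g => g ∈ N] (φ ψ : ↥N → ℂ)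
    (hφ : ∃ V : FDRep ℂ ↥N, Simple V ∧ V.character = φ)
    (hψ : ∃ V : FDRep ℂ ↥N, Simple V ∧ V.character = ψ) :
    inducedChar N φ = inducedChar N ψ ↔
      ∃ g : G, ∀ n : ↥N, ψ n = φ ⟨g * ↑n * g⁻¹, hN.conj_mem ↑n n.2 g⟩ := by
  constructor
  · intro h
    apply inducedChar_aux N φ ψ hφ hψ
    intro n
    have h2 := congrFun h ↑n
    simp only [inducedChar] at h2
    have hcard : (Fintype.card ↥N : ℂ) ≠ 0 := Nat.cast_ne_zero.mpr Fintype.card_ne_zero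
    have h3 := mul_left_cancel₀ (inv_ne_zero hcard) h2
    have hd : ∀ (χ : ↥N → ℂ) (x : G),
        (if hm : x⁻¹ * ↑n * x ∈ N then χ ⟨x⁻¹ * ↑n * x, hm⟩ else 0)
          = χ ((MulAut.conjNormal x⁻¹ : ↥N ≃* ↥N) n) := by
      intro χ x
      have hm : x⁻¹ * ↑n * x ∈ N := by
        have := hN.conj_mem ↑n n.2 x⁻¹
        simpa using this
      rw [dif_pos hm]
      congr 1
      ext
      simp
    calc ∑ x : G, φ ((MulAut.conjNormal x⁻¹ : ↥N ≃* ↥N) n)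
        = ∑ x : G, (if hm : x⁻¹ * ↑n * x ∈ N then φ ⟨x⁻¹ * ↑n * x, hm⟩ else 0) :=
          Finset.sum_congr rfl fun x _ => (hd φ x).symm
      _ = ∑ x : G, (if hm : x⁻¹ * ↑n * x ∈ N then ψ ⟨x⁻¹ * ↑n * x, hm⟩ else 0) := h3
      _ = ∑ x : G, ψ ((MulAut.conjNormal x⁻¹ : ↥N ≃* ↥N) n) :=
          Finset.sum_congr rfl fun x _ => hd ψ x
  · rintro ⟨g, hg⟩
    funext a
    simp only [inducedChar]
    congr 1
    apply Fintype.sum_equiv (Equiv.mulRight g)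
    intro x
    simp only [Equiv.coe_mulRight]
    by_cases hx : x⁻¹ * a * x ∈ N
    · have hx' : (x * g)⁻¹ * a * (x * g) ∈ N := by
        have := hN.conj_mem _ hx g⁻¹
        have e : g⁻¹ * (x⁻¹ * a * x) * g⁻¹⁻¹ = (x * g)⁻¹ * a * (x * g) := by group
        rwa [e] at this
      rw [dif_pos hx]
      simp only [hx', ↓reduceDIte]
      rw [hg ⟨(x * g)⁻¹ * a * (x * g), hx'⟩]
      congr 1
      ext
      show x⁻¹ * a * x = g * ((x * g)⁻¹ * a * (x * g)) * g⁻¹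
      group
    · have hx' : ¬ ((x * g)⁻¹ * a * (x * g) ∈ N) := by
        intro hmem
        apply hx
        have := hN.conj_mem _ hmem g
        have e : g * ((x * g)⁻¹ * a * (x * g)) * g⁻¹ = x⁻¹ * a * x := by group
        rwa [e] at this
      rw [dif_neg hx]
      simp only [hx', ↓reduceDIte]
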